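/- A special isotropic dimension vector d (with d₀ = n) of the generalized subspace quiver is isotropic for the Euler form, i.e., ⟨d, d⟩ = 0; and d is indivisible (its entries have no common factor > 1) if and only if n = 2. -/
import Mathlib


open Finset

/-- A special isotropic dimension vector `d` (balanced, `d₀ = n ≥ 2`, exactly four
entries `d_{ij}` strictly between `0` and `n`, each equal to `n/2` with trivial weight)
is isotropic for the Euler form, and it is indivisible iff `n = 2`. -/
theorem special_isotropic_props {m : ℕ} {r : Fin m → ℕ}
    (w : ∀ i, Fin (r i) → ℕ) (hw : ∀ i j, 0 < w i j)
    (d0 : ℕ) (dv : ∀ i, Fin (r i) → ℕ) (hn : 2 ≤ d0)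
    (hbal : ∀ i, ∑ j, w i j * dv i j = d0)
    (hfour : (univ.filter
      (fun p : (i : Fin m) × Fin (r i) => 0 < dv p.1 p.2 ∧ dv p.1 p.2 < d0)).card = 4)
    (hhalf : ∀ i j, 0 < dv i j → dv i j < d0 → 2 * dv i j = d0 ∧ w i j = 1) :
    ((d0 : ℤ) ^ 2 + ∑ i, ∑ j, (dv i j : ℤ) ^ 2
        - ∑ i, ∑ j, (w i j : ℤ) * (dv i j : ℤ) * (d0 : ℤ) = 0) ∧
    ((∀ t : ℕ, 1 < t → ¬(t ∣ d0 ∧ ∀ i j, t ∣ dv i j)) ↔ d0 = 2) := by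
  classical
  have hd0pos : 0 < d0 := by omega
  have hle : ∀ i j, w i j * dv i j ≤ d0 := by
    intro i j
    rw [← hbal i]
    exact Finset.single_le_sum (f := fun j => w i j * dv i j)
      (fun _ _ => Nat.zero_le _) (mem_univ j)
  have hcases : ∀ i j, dv i j = 0 ∨ (dv i j = d0 ∧ w i j = 1) ∨
      (2 * dv i j = d0 ∧ w i j = 1) := by
    intro i j
    rcases Nat.eq_zero_or_pos (dv i j) with h0 | h0
    · exact Or.inl h0
    · rcases lt_or_ge (dv i j) d0 with hlt | hge
      · exact Or.inr (Or.inr (hhalf i j h0 hlt))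
      · have h1 := hle i j
        have h2 := hw i j
        have hdv : dv i j = d0 := by nlinarith
        refine Or.inr (Or.inl ⟨hdv, ?_⟩)
        nlinarith
  have hSne : (univ.filter
      (fun p : (i : Fin m) × Fin (r i) => 0 < dv p.1 p.2 ∧ dv p.1 p.2 < d0)).Nonempty := by
    rw [← Finset.card_pos, hfour]; norm_num
  obtain ⟨p0, hp0⟩ := hSne
  have hp0' := (Finset.mem_filter.mp hp0).2
  obtain ⟨hk, hw0⟩ := hhalf p0.1 p0.2 hp0'.1 hp0'.2
  set k := dv p0.1 p0.2 with hkdef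
  constructor
  · -- Euler form vanishes
    have e1 : (∑ i, ∑ j, (w i j : ℤ) * (dv i j : ℤ) * (d0 : ℤ))
        - ∑ i, ∑ j, (dv i j : ℤ) ^ 2
        = ∑ p : (i : Fin m) × Fin (r i),
            ((w p.1 p.2 : ℤ) * (dv p.1 p.2 : ℤ) * (d0 : ℤ) - (dv p.1 p.2 : ℤ) ^ 2) := by
      rw [Finset.sum_sigma', Finset.sum_sigma', ← Finset.sum_sub_distrib,
        Finset.univ_sigma_univ]
    have key : (∑ i, ∑ j, (w i j : ℤ) * (dv i j : ℤ) * (d0 : ℤ))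
        - ∑ i, ∑ j, (dv i j : ℤ) ^ 2 = (d0 : ℤ) ^ 2 := by
      rw [e1]
      rw [← Finset.sum_filter_add_sum_filter_not univ
        (fun p : (i : Fin m) × Fin (r i) => 0 < dv p.1 p.2 ∧ dv p.1 p.2 < d0)]
      have hz : ∑ p ∈ (univ.filter
          (fun p : (i : Fin m) × Fin (r i) => ¬(0 < dv p.1 p.2 ∧ dv p.1 p.2 < d0))),
          ((w p.1 p.2 : ℤ) * (dv p.1 p.2 : ℤ) * (d0 : ℤ) - (dv p.1 p.2 : ℤ) ^ 2) = 0 := by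
        apply Finset.sum_eq_zero
        intro p hp
        have hnp := (Finset.mem_filter.mp hp).2
        rcases hcases p.1 p.2 with h | ⟨h1, h2⟩ | ⟨h1, h2⟩
        · simp [h]
        · rw [h1, h2]; push_cast; ring
        · exfalso; apply hnp; omega
      have hs : ∑ p ∈ (univ.filter
          (fun p : (i : Fin m) × Fin (r i) => 0 < dv p.1 p.2 ∧ dv p.1 p.2 < d0)),
          ((w p.1 p.2 : ℤ) * (dv p.1 p.2 : ℤ) * (d0 : ℤ) - (dv p.1 p.2 : ℤ) ^ 2)
          = (d0 : ℤ) ^ 2 := by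
        have h4 : (d0 : ℤ) = 2 * (k : ℤ) := by exact_mod_cast hk.symm
        have hterm : ∀ p ∈ (univ.filter
            (fun p : (i : Fin m) × Fin (r i) => 0 < dv p.1 p.2 ∧ dv p.1 p.2 < d0)),
            ((w p.1 p.2 : ℤ) * (dv p.1 p.2 : ℤ) * (d0 : ℤ) - (dv p.1 p.2 : ℤ) ^ 2)
              = (k : ℤ) ^ 2 := by
          intro p hp
          have hpp := (Finset.mem_filter.mp hp).2
          obtain ⟨h1, h2⟩ := hhalf p.1 p.2 hpp.1 hpp.2
          have hdk : dv p.1 p.2 = k := by omega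
          rw [h2, hdk, h4]; push_cast; ring
        rw [Finset.sum_congr rfl hterm, Finset.sum_const, hfour, nsmul_eq_mul, h4]
        push_cast; ring
      rw [hz, hs, add_zero]
    linarith
  · constructor
    · -- indivisible → d0 = 2
      intro hind
      by_contra hne
      have hk2 : 2 ≤ k := by omega
      exact hind k hk2 ⟨⟨2, by omega⟩, fun i j => by
        rcases hcases i j with h | ⟨h1, _⟩ | ⟨h1, _⟩
        · simp [h]
        · exact ⟨2, by omega⟩
        · have : dv i j = k := by omega
          rw [this]⟩
    · -- d0 = 2 → indivisible
      intro hd2 t ht ⟨htd, htdv⟩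
      have hk1 : k = 1 := by omega
      have := htdv p0.1 p0.2
      rw [← hkdef, hk1] at this
      have := Nat.le_of_dvd one_pos this
      omega
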